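/- Let λ : ℝ^{2m} → ℝ (m ≥ 2) be additive on symplectically orthogonal pairs, i.e., λ(ζ₁+ζ₂) = λ(ζ₁)+λ(ζ₂) whenever [ζ₁,ζ₂]=0, and additionally satisfy λ(c·ζ) = c·λ(ζ) for all scalars c ∈ ℝ and ζ ∈ ℝ^{2m} (which follows from compatibility with polynomial post-processing on single observables). Then λ is a linear functional on ℝ^{2m}, hence there exists φ ∈ ℝ^{2m} such that λ(ζ) = φ·ζ for all ζ. -/

import Mathlib

open MeasureTheory Matrix

/-- The standard symplectic matrix on ℝ^{2m}, block form ((0, -I), (I, 0)). -/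
noncomputable def Ω (m : ℕ) : Matrix (Fin m ⊕ Fin m) (Fin m ⊕ Fin m) ℝ :=
  Matrix.fromBlocks 0 (-1) 1 0

/-- The standard symplectic form [u,v] = uᵀ ω v on ℝ^{2m}. -/
noncomputable def symp {m : ℕ} (u v : Fin m ⊕ Fin m → ℝ) : ℝ :=
  u ⬝ᵥ (Ω m).mulVec v

section aux
variable {m : ℕ}

lemma Omega_transpose (m : ℕ) : (Ω m)ᵀ = -Ω m := by
  simp [Ω, Matrix.fromBlocks_transpose, Matrix.fromBlocks_neg]

lemma Omega_mul (m : ℕ) : Ω m * Ω m = -1 := by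
  rw [Ω, Matrix.fromBlocks_multiply]
  simp [← Matrix.fromBlocks_one, Matrix.fromBlocks_neg]

lemma symp_antisymm (u v : Fin m ⊕ Fin m → ℝ) : symp v u = -symp u v := by
  have h : symp u v = -symp v u := by
    rw [symp, Matrix.dotProduct_mulVec,
      show Ω m = -(Ω m)ᵀ from by rw [Omega_transpose, neg_neg],
      Matrix.vecMul_neg, Matrix.vecMul_transpose, neg_dotProduct,
      dotProduct_comm]
    rfl
  linarith

lemma symp_self (u : Fin m ⊕ Fin m → ℝ) : symp u u = 0 := by
  have := symp_antisymm u u; linarith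

lemma symp_add_left (u u' v : Fin m ⊕ Fin m → ℝ) :
    symp (u + u') v = symp u v + symp u' v := by
  simp [symp, add_dotProduct]

lemma symp_add_right (u v v' : Fin m ⊕ Fin m → ℝ) :
    symp u (v + v') = symp u v + symp u v' := by
  simp [symp, Matrix.mulVec_add, dotProduct_add]

lemma symp_smul_right (c : ℝ) (u v : Fin m ⊕ Fin m → ℝ) :
    symp u (c • v) = c * symp u v := by
  simp [symp, Matrix.mulVec_smul, dotProduct_smul]

lemma symp_neg_left (u v : Fin m ⊕ Fin m → ℝ) : symp (-u) v = -symp u v := by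
  simp [symp, neg_dotProduct]

lemma symp_neg_right (u v : Fin m ⊕ Fin m → ℝ) : symp u (-v) = -symp u v := by
  simp [symp, Matrix.mulVec_neg, dotProduct_neg]

lemma symp_sub_right (u v v' : Fin m ⊕ Fin m → ℝ) :
    symp u (v - v') = symp u v - symp u v' := by
  rw [sub_eq_add_neg, symp_add_right, symp_neg_right]; ring

lemma symp_negJ (w : Fin m ⊕ Fin m → ℝ) :
    symp w (-(Ω m).mulVec w) = w ⬝ᵥ w := by
  unfold symp
  rw [Matrix.mulVec_neg, Matrix.mulVec_mulVec, Omega_mul, Matrix.neg_mulVec,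
    Matrix.one_mulVec, neg_neg]

end aux

theorem stmt_3 (m : ℕ) (hm : 2 ≤ m) (lam : (Fin m ⊕ Fin m → ℝ) → ℝ)
    (hadd : ∀ ζ₁ ζ₂ : Fin m ⊕ Fin m → ℝ, symp ζ₁ ζ₂ = 0 →
      lam (ζ₁ + ζ₂) = lam ζ₁ + lam ζ₂)
    (hsmul : ∀ (c : ℝ) (ζ : Fin m ⊕ Fin m → ℝ), lam (c • ζ) = c * lam ζ) :
    ∃ φ : Fin m ⊕ Fin m → ℝ, ∀ ζ, lam ζ = φ ⬝ᵥ ζ := by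
  classical
  have hneg : ∀ x : Fin m ⊕ Fin m → ℝ, lam (-x) = -lam x := by
    intro x
    have := hsmul (-1) x
    simpa [neg_smul, one_smul] using this
  -- key four-vector lemma
  have key : ∀ a b w z : Fin m ⊕ Fin m → ℝ,
      symp a b + symp w z = 0 → symp a w = 0 → symp a z = 0 →
      symp b w = 0 → symp b z = 0 →
      lam (a + b) + lam (w + z) = lam a + lam b + lam w + lam z := by
    intro a b w z h0 haw haz hbw hbz
    have h1 : symp (a + w) (b + z) = 0 := by
      rw [symp_add_left, symp_add_right, symp_add_right]
      have h : symp w b = -symp b w := symp_antisymm b w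
      rw [h, hbw, haz]; linarith
    have h2 : symp (a + b) (w + z) = 0 := by
      rw [symp_add_left, symp_add_right, symp_add_right, haw, haz, hbw, hbz]; ring
    have e1 : lam ((a + w) + (b + z)) = lam a + lam w + lam b + lam z := by
      rw [hadd _ _ h1, hadd _ _ haw, hadd _ _ hbz]; ring
    have e2 : lam ((a + b) + (w + z)) = lam (a + b) + lam (w + z) := hadd _ _ h2
    have e3 : (a + w) + (b + z) = (a + b) + (w + z) := by abel
    rw [e3, e2] at e1
    linarith
  -- full additivity
  have hadd' : ∀ u v : Fin m ⊕ Fin m → ℝ, lam (u + v) = lam u + lam v := by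
    intro u v
    by_cases hs : symp u v = 0
    · exact hadd u v hs
    · set s := symp u v with hs_def
      have hvu : symp v u = -s := symp_antisymm u v
      have hproj : ∀ x : Fin m ⊕ Fin m → ℝ,
          symp u (x - ((-(symp v x)/s) • u + (symp u x / s) • v)) = 0 ∧
          symp v (x - ((-(symp v x)/s) • u + (symp u x / s) • v)) = 0 := by
        intro x
        constructor
        · rw [symp_sub_right, symp_add_right, symp_smul_right, symp_smul_right, symp_self,
            ← hs_def]
          field_simp
          ring
        · rw [symp_sub_right, symp_add_right, symp_smul_right, symp_smul_right, symp_self,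
            hvu]
          field_simp
          ring
      obtain ⟨x, hx⟩ : ∃ x : Fin m ⊕ Fin m → ℝ,
          x - ((-(symp v x)/s) • u + (symp u x / s) • v) ≠ 0 := by
        by_contra h
        push_neg at h
        have htop : (⊤ : Submodule ℝ (Fin m ⊕ Fin m → ℝ)) ≤
            Submodule.span ℝ ({u, v} : Set (Fin m ⊕ Fin m → ℝ)) := by
          intro x _
          have hx0 := h x
          rw [sub_eq_zero] at hx0
          rw [hx0]
          exact Submodule.add_mem _
            (Submodule.smul_mem _ _ (Submodule.subset_span (by simp)))
            (Submodule.smul_mem _ _ (Submodule.subset_span (by simp)))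
        have h1 : Module.finrank ℝ (Fin m ⊕ Fin m → ℝ) ≤ 2 := by
          have h2 := finrank_span_le_card (R := ℝ) ({u, v} : Set (Fin m ⊕ Fin m → ℝ))
          rw [top_le_iff.mp htop] at h2
          have h4 : ({u, v} : Set (Fin m ⊕ Fin m → ℝ)).toFinset.card ≤ 2 := by
            rw [Set.toFinset_insert, Set.toFinset_singleton]
            exact (Finset.card_insert_le _ _).trans (by simp)
          calc Module.finrank ℝ (Fin m ⊕ Fin m → ℝ)
              = Module.finrank ℝ (⊤ : Submodule ℝ (Fin m ⊕ Fin m → ℝ)) :=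
                (finrank_top ℝ _).symm
            _ ≤ ({u, v} : Set (Fin m ⊕ Fin m → ℝ)).toFinset.card := h2
            _ ≤ 2 := h4
        have h5 : Module.finrank ℝ (Fin m ⊕ Fin m → ℝ) = m + m := by
          rw [Module.finrank_pi]; simp
        omega
      set w₀ : Fin m ⊕ Fin m → ℝ := x - ((-(symp v x)/s) • u + (symp u x / s) • v) with hw₀
      obtain ⟨huw₀, hvw₀⟩ := hproj x
      rw [← hw₀] at huw₀ hvw₀
      set y : Fin m ⊕ Fin m → ℝ := -(Ω m).mulVec w₀ with hy
      set z₀ : Fin m ⊕ Fin m → ℝ := y - ((-(symp v y)/s) • u + (symp u y / s) • v) with hz₀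
      obtain ⟨huz₀, hvz₀⟩ := hproj y
      rw [← hz₀] at huz₀ hvz₀
      have hw₀u : symp w₀ u = 0 := by rw [symp_antisymm u w₀, huw₀, neg_zero]
      have hw₀v : symp w₀ v = 0 := by rw [symp_antisymm v w₀, hvw₀, neg_zero]
      have hw₀z₀ : symp w₀ z₀ = w₀ ⬝ᵥ w₀ := by
        rw [hz₀, symp_sub_right, symp_add_right, symp_smul_right, symp_smul_right,
          hw₀u, hw₀v, hy, symp_negJ]
        ring
      have hww : symp w₀ z₀ ≠ 0 := by
        rw [hw₀z₀, Ne, dotProduct_self_eq_zero]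
        exact hx
      set z : Fin m ⊕ Fin m → ℝ := (-s / symp w₀ z₀) • z₀ with hz
      have huz : symp u z = 0 := by rw [hz, symp_smul_right, huz₀, mul_zero]
      have hvz : symp v z = 0 := by rw [hz, symp_smul_right, hvz₀, mul_zero]
      have hwz : symp w₀ z = -s := by
        rw [hz, symp_smul_right]
        field_simp
      have hzw : symp z w₀ = s := by rw [symp_antisymm w₀ z, hwz, neg_neg]
      have hnu_w : symp (-u) w₀ = 0 := by rw [symp_neg_left, huw₀, neg_zero]
      have hnu_z : symp (-u) z = 0 := by rw [symp_neg_left, huz, neg_zero]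
      have hnv_w : symp (-v) w₀ = 0 := by rw [symp_neg_left, hvw₀, neg_zero]
      have hnv_z : symp (-v) z = 0 := by rw [symp_neg_left, hvz, neg_zero]
      have hvnu : symp v (-u) = s := by rw [symp_neg_right, hvu, neg_neg]
      have hunv : symp u (-v) = -s := by rw [symp_neg_right, ← hs_def]
      have K1 := key u v w₀ z (by rw [← hs_def, hwz]; ring) huw₀ huz hvw₀ hvz
      have K2 := key v (-u) w₀ z (by rw [hvnu, hwz]; ring) hvw₀ hvz hnu_w hnu_z
      have K3 := key v u z w₀ (by rw [hvu, hzw]; ring) hvz hvw₀ huz huw₀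
      have K4 := key u (-v) z w₀ (by rw [hunv, hzw]; ring) huz huw₀ hnv_z hnv_w
      have hc : lam (v + u) = lam (u + v) := by rw [add_comm]
      have hrel : lam (u + -v) = - lam (v + -u) := by
        rw [show u + -v = -(v + -u) from by abel, hneg]
      rw [hc] at K3
      rw [hneg u] at K2
      rw [hneg v, hrel] at K4
      linarith
  -- build a linear map and conclude
  let L : (Fin m ⊕ Fin m → ℝ) →ₗ[ℝ] ℝ :=
    { toFun := lam
      map_add' := hadd'
      map_smul' := fun c x => by simpa using hsmul c x }
  refine ⟨fun i => lam (fun j => if i = j then 1 else 0), fun ζ => ?_⟩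
  have h := LinearMap.pi_apply_eq_sum_univ L ζ
  simp only [L, LinearMap.coe_mk, AddHom.coe_mk] at h
  show lam ζ = _
  rw [h]
  simp [dotProduct, mul_comm]
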